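/- Let γ > 1, g > 0, t₁ ∈ (0,1), and let q : [0,1] → ℝ be continuous with q(y) > 0 for all y ∈ [0,1]. Set μ² := (γ−1)/(γ+1) and define t(y) := ((γ+1)/2)·√(1 − (1 − μ⁴(1 + 2t₁/(γ−1))²)·exp(−(γ−1)·g·∫_y^1 q(τ)⁻² dτ)) − (γ−1)/2 for y ∈ [0,1]. Then t(1) = t₁, and for every y ∈ [0,1] the function t is differentiable at y (within [0,1]) with derivative t'(y) = −(g/q(y)²)·((γ−1)/4)·(1 − γ − 2t(y) + (γ+1)²/(γ−1+2t(y))). -/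

import Mathlib

open Real Set

/-- The explicit function
`t(y) = ((γ+1)/2)·√(1 − (1 − μ⁴(1 + 2t₁/(γ−1))²)·exp(−(γ−1)g∫_y^1 q(τ)⁻² dτ)) − (γ−1)/2`
satisfies `t(1) = t₁` and solves the ODE
`t'(y) = −(g/q(y)²)·((γ−1)/4)·(1 − γ − 2t(y) + (γ+1)²/(γ−1+2t(y)))` on `[0,1]`. -/
theorem mach_ode_explicit_solution
    (γ g t₁ : ℝ) (q : ℝ → ℝ) (hγ : 1 < γ) (hg : 0 < g)
    (ht₁ : t₁ ∈ Set.Ioo (0 : ℝ) 1)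
    (hqc : ContinuousOn q (Set.Icc 0 1))
    (hqpos : ∀ y ∈ Set.Icc (0 : ℝ) 1, 0 < q y)
    (t : ℝ → ℝ)
    (ht : ∀ y, t y =
      (γ + 1) / 2 *
        Real.sqrt (1 -
          (1 - ((γ - 1) / (γ + 1)) ^ 2 * (1 + 2 * t₁ / (γ - 1)) ^ 2) *
            Real.exp (-((γ - 1) * g * ∫ τ in y..1, (q τ ^ 2)⁻¹)))
      - (γ - 1) / 2) :
    t 1 = t₁ ∧
      ∀ y ∈ Set.Icc (0 : ℝ) 1,
        HasDerivWithinAt t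
          (-(g / q y ^ 2) * ((γ - 1) / 4) *
            (1 - γ - 2 * t y + (γ + 1) ^ 2 / (γ - 1 + 2 * t y)))
          (Set.Icc 0 1) y := by
  have hγ1 : (0:ℝ) < γ - 1 := by linarith
  have hγ2 : (0:ℝ) < γ + 1 := by linarith
  have hγ1' : γ - 1 ≠ 0 := hγ1.ne'
  have hγ2' : γ + 1 ≠ 0 := hγ2.ne'
  set Cc : ℝ := 1 - ((γ - 1) / (γ + 1)) ^ 2 * (1 + 2 * t₁ / (γ - 1)) ^ 2 with hCc
  set s : ℝ := (γ - 1 + 2 * t₁) / (γ + 1) with hsdef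
  have hs2 : 1 - Cc = s ^ 2 := by
    rw [hCc, hsdef]; field_simp; ring
  have hs0 : 0 < s := by
    apply div_pos (by linarith [ht₁.1]) hγ2
  have hs1 : s < 1 := by
    rw [hsdef, div_lt_one hγ2]; linarith [ht₁.2]
  have hCc1 : Cc < 1 := by nlinarith
  have hCc0 : 0 < Cc := by nlinarith
  -- extend q to a continuous positive function on ℝ
  set Q : ℝ → ℝ := fun τ => q (max 0 (min 1 τ)) with hQ
  have hmem : ∀ τ : ℝ, max 0 (min 1 τ) ∈ Set.Icc (0:ℝ) 1 :=
    fun τ => ⟨le_max_left _ _, max_le (by norm_num) (min_le_left _ _)⟩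
  have hQc : Continuous Q := by
    apply hqc.comp_continuous
    · exact continuous_const.max (continuous_const.min continuous_id)
    · exact hmem
  have hQpos : ∀ τ, 0 < Q τ := fun τ => hqpos _ (hmem τ)
  have hQq : ∀ τ ∈ Set.Icc (0:ℝ) 1, Q τ = q τ := by
    intro τ hτ
    rw [hQ]; simp only
    rw [min_eq_right hτ.2, max_eq_right hτ.1]
  have hint : Continuous fun τ => (Q τ ^ 2)⁻¹ :=
    (hQc.pow 2).inv₀ (fun τ => (pow_pos (hQpos τ) 2).ne')
  set F : ℝ → ℝ := fun u => ∫ τ in u..1, (Q τ ^ 2)⁻¹ with hF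
  have hFq : ∀ y ∈ Set.Icc (0:ℝ) 1, (∫ τ in y..1, (q τ ^ 2)⁻¹) = F y := by
    intro y hy
    apply intervalIntegral.integral_congr
    intro τ hτ
    have hτ' : τ ∈ Set.Icc (0:ℝ) 1 := by
      rcases hτ with ⟨h1, h2⟩
      constructor
      · exact le_trans (le_min hy.1 (by norm_num)) h1
      · exact le_trans h2 (max_le hy.2 le_rfl)
    simp only
    rw [hQq τ hτ']
  have hFnonneg : ∀ y ∈ Set.Icc (0:ℝ) 1, 0 ≤ F y := by
    intro y hy
    apply intervalIntegral.integral_nonneg hy.2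
    intro τ _
    positivity
  have hGpos : ∀ y ∈ Set.Icc (0:ℝ) 1,
      s ^ 2 ≤ 1 - Cc * Real.exp (-((γ - 1) * g * F y)) := by
    intro y hy
    have hE1 : Real.exp (-((γ - 1) * g * F y)) ≤ 1 := by
      rw [Real.exp_le_one_iff]
      have h := mul_nonneg (mul_nonneg hγ1.le hg.le) (hFnonneg y hy)
      linarith
    nlinarith [hCc0]
  constructor
  · -- t 1 = t₁
    rw [ht 1]
    have h0 : (∫ τ in (1:ℝ)..1, (q τ ^ 2)⁻¹) = 0 := intervalIntegral.integral_same
    rw [h0]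
    rw [show -((γ - 1) * g * (0:ℝ)) = 0 by ring, Real.exp_zero, mul_one]
    rw [show (1:ℝ) - Cc = s ^ 2 from hs2, Real.sqrt_sq hs0.le, hsdef]
    field_simp
    ring
  · intro y hy
    have hqQ : q y = Q y := (hQq y hy).symm
    -- FTC
    have h1 : HasDerivAt F (-(Q y ^ 2)⁻¹) y := by
      have := intervalIntegral.integral_hasStrictDerivAt_left
        (hint.intervalIntegrable y 1) (hint.stronglyMeasurableAtFilter _ _)
        hint.continuousAt
      exact this.hasDerivAt
    have h2 := ((h1.const_mul ((γ - 1) * g)).neg).exp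
    have h3 := (h2.const_mul Cc).const_sub 1
    have hGy : 0 < 1 - Cc * Real.exp (-((γ - 1) * g * F y)) :=
      lt_of_lt_of_le (by positivity) (hGpos y hy)
    have h4 := h3.sqrt hGy.ne'
    have h5 := (h4.const_mul ((γ + 1) / 2)).sub_const ((γ - 1) / 2)
    have h6 : HasDerivWithinAt t
        ((γ + 1) / 2 *
          (-(Cc * (Real.exp (-((γ - 1) * g * F y)) * -((γ - 1) * g * -(Q y ^ 2)⁻¹))) /
            (2 * Real.sqrt (1 - Cc * Real.exp (-((γ - 1) * g * F y))))))
        (Set.Icc 0 1) y := by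
      refine HasDerivWithinAt.congr h5.hasDerivWithinAt ?_ ?_
      · intro u hu; rw [ht u, hFq u hu]; rfl
      · rw [ht y, hFq y hy]; rfl
    -- identify the derivative
    set E : ℝ := Real.exp (-((γ - 1) * g * F y)) with hE
    set S : ℝ := Real.sqrt (1 - Cc * E) with hS
    have hSpos : 0 < S := Real.sqrt_pos.2 hGy
    have hS2 : S ^ 2 = 1 - Cc * E := Real.sq_sqrt hGy.le
    have hty : t y = (γ + 1) / 2 * S - (γ - 1) / 2 := by
      rw [ht y, hFq y hy]
    have hkey : -(g / q y ^ 2) * ((γ - 1) / 4) *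
        (1 - γ - 2 * t y + (γ + 1) ^ 2 / (γ - 1 + 2 * t y)) =
        (γ + 1) / 2 * (-(Cc * (E * -((γ - 1) * g * -(Q y ^ 2)⁻¹))) / (2 * S)) := by
      rw [hty, hqQ]
      have hden : γ - 1 + 2 * ((γ + 1) / 2 * S - (γ - 1) / 2) = (γ + 1) * S := by ring
      rw [hden]
      have hQy : Q y ≠ 0 := (hQpos y).ne'
      clear_value Cc E S
      field_simp
      linear_combination (4 * (γ + 1)) * hS2
    rw [hkey]
    exact h6
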